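/- arXiv:1708.06651 — 11 statements merged into one kernel-verified Lean document; each statement's English description precedes it below -/
import Mathlib

section
/- Let (X,d) be a metric space, Z a Hausdorff topological vector space, and C ⊆ Z a closed convex pointed cone with nonempty interior. If g : X → Z is almost upper semicontinuous (a-usc) at x₀ ∈ X, then g is quasi upper semicontinuous (q-usc) at x₀. -/
open Filter Topology Set Pointwise

universe u

/-- A directed nonempty index type, serving as the index of a net. -/
structure DirIx : Type (u + 1) where
  carrier : Type u
  [pre : Preorder carrier]
  [dir : IsDirected carrier (· ≤ ·)]
  [ne : Nonempty carrier]

attribute [instance] DirIx.pre DirIx.dir DirIx.ne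

/-- `h` is almost upper semicontinuous (a-usc) at `x₀` relative to the set `K`:
for every net `x` in `K` converging to `x₀` there is a net `z` in `Z` converging
to some `zl` with `h (x α) - z α ∈ -C` for all `α` and `h x₀ - zl ∈ C`. -/
def AUscAt {X Z : Type*} [TopologicalSpace X] [TopologicalSpace Z] [AddCommGroup Z]
    (C : Set Z) (K : Set X) (h : X → Z) (x₀ : X) : Prop :=
  ∀ (D : DirIx.{u}) (x : D.carrier → X), (∀ α, x α ∈ K) →
    Tendsto x atTop (𝓝 x₀) →
    ∃ (z : D.carrier → Z) (zl : Z), Tendsto z atTop (𝓝 zl) ∧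
      (∀ α, h (x α) - z α ∈ -C) ∧ h x₀ - zl ∈ C

/-- `h` is quasi upper semicontinuous (q-usc) at `x₀`: for every `k` with
`k + h x₀ ∉ C` there is a neighborhood `U` of `x₀` with `k + h x ∉ C` on `U`. -/
def QUscAt {X Z : Type*} [TopologicalSpace X] [TopologicalSpace Z] [AddCommGroup Z]
    (C : Set Z) (h : X → Z) (x₀ : X) : Prop :=
  ∀ k : Z, k + h x₀ ∉ C → ∃ U ∈ 𝓝 x₀, ∀ x ∈ U, k + h x ∉ C

theorem stmt3 {X Z : Type*} [MetricSpace X]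
    [AddCommGroup Z] [Module ℝ Z] [TopologicalSpace Z] [IsTopologicalAddGroup Z]
    [ContinuousSMul ℝ Z] [T2Space Z]
    (C : Set Z) (hcone : ∀ c ∈ C, ∀ t : ℝ, 0 ≤ t → t • c ∈ C)
    (hconvex : C + C = C) (hpointed : C ∩ (-C) = {0})
    (hint : (interior C).Nonempty) (hCcl : IsClosed C)
    (g : X → Z) (x₀ : X)
    (hausc : AUscAt.{u} C Set.univ g x₀) :
    QUscAt C g x₀ := by
  have hadd : ∀ a ∈ C, ∀ b ∈ C, a + b ∈ C := by
    intro a ha b hb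
    rw [← hconvex]; exact Set.add_mem_add ha hb
  intro k hk
  by_contra hcon
  push_neg at hcon
  -- for each n get a point in the ball with k + g x ∈ C
  have hsel : ∀ n : ℕ, ∃ x, x ∈ Metric.ball x₀ (1 / (n + 1)) ∧ k + g x ∈ C := by
    intro n
    obtain ⟨x, hx, hgx⟩ := hcon (Metric.ball x₀ (1 / (n + 1)))
      (Metric.ball_mem_nhds x₀ (by positivity))
    exact ⟨x, hx, hgx⟩
  choose f hf hgf using hsel
  have hft : Tendsto f atTop (𝓝 x₀) := by
    rw [Metric.tendsto_atTop]
    intro ε hε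
    obtain ⟨N, hN⟩ := exists_nat_one_div_lt hε
    refine ⟨N, fun n hn => ?_⟩
    have := hf n
    rw [Metric.mem_ball] at this
    calc dist (f n) x₀ < 1 / (n + 1) := this
      _ ≤ 1 / (N + 1) := by
          apply one_div_le_one_div_of_le (by positivity)
          exact_mod_cast Nat.succ_le_succ hn
      _ < ε := hN
  set D : DirIx.{u} := ⟨ULift.{u} ℕ⟩ with hD
  have hdown : Tendsto (ULift.down : ULift.{u} ℕ → ℕ) atTop atTop :=
    tendsto_atTop_atTop.mpr fun b => ⟨ULift.up b, fun a h => h⟩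
  obtain ⟨z, zl, hzt, hz, hzl⟩ := hausc D (fun α => f α.down)
    (fun _ => Set.mem_univ _) (hft.comp hdown)
  -- k + z α ∈ C for all α
  have hkz : ∀ α : D.carrier, k + z α ∈ C := by
    intro α
    have h1 : k + g (f α.down) ∈ C := hgf α.down
    have h2 : z α - g (f α.down) ∈ C := by
      have := hz α
      rw [Set.mem_neg] at this
      simpa [neg_sub] using this
    have := hadd _ h1 _ h2
    rw [show k + z α = k + g (f α.down) + (z α - g (f α.down)) by abel]
    exact this
  have hlim : Tendsto (fun α : D.carrier => k + z α) atTop (𝓝 (k + zl)) :=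
    tendsto_const_nhds.add hzt
  have hkzl : k + zl ∈ C :=
    hCcl.mem_of_tendsto hlim (Eventually.of_forall hkz)
  have : k + g x₀ ∈ C := by
    have := hadd _ hkzl _ hzl
    rw [show k + g x₀ = k + zl + (g x₀ - zl) by abel]
    exact this
  exact hk this
end

section
/- Let X be a Hausdorff topological space, Z a Hausdorff topological vector space, C ⊆ Z a convex pointed cone with nonempty interior, and K a nonempty subset of X. If f, g : K → Z are both almost upper semicontinuous (a-usc) at x₀ ∈ K, then f + g is almost upper semicontinuous at x₀. -/
open Filter Topology Set Pointwise

universe u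

theorem stmt4 {X Z : Type*} [TopologicalSpace X] [T2Space X]
    [AddCommGroup Z] [Module ℝ Z] [TopologicalSpace Z] [IsTopologicalAddGroup Z]
    [ContinuousSMul ℝ Z] [T2Space Z]
    (C : Set Z) (hcone : ∀ c ∈ C, ∀ t : ℝ, 0 ≤ t → t • c ∈ C)
    (hconvex : C + C = C) (hpointed : C ∩ (-C) = {0})
    (hint : (interior C).Nonempty)
    (K : Set X) (hKne : K.Nonempty) (f g : X → Z) (x₀ : X) (hx₀ : x₀ ∈ K)
    (hf : AUscAt.{u} C K f x₀) (hg : AUscAt.{u} C K g x₀) :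
    AUscAt.{u} C K (fun x => f x + g x) x₀ := by
  intro D x hxK hx
  obtain ⟨zf, zlf, hzf, hfm, hf0⟩ := hf D x hxK hx
  obtain ⟨zg, zlg, hzg, hgm, hg0⟩ := hg D x hxK hx
  have hadd : ∀ a ∈ C, ∀ b ∈ C, a + b ∈ C := by
    intro a ha b hb
    rw [← hconvex]; exact Set.add_mem_add ha hb
  refine ⟨fun α => zf α + zg α, zlf + zlg, hzf.add hzg, ?_, ?_⟩
  · intro α
    have : -(f (x α) - zf α) + -(g (x α) - zg α) ∈ C :=
      hadd _ (by simpa using hfm α) _ (by simpa using hgm α)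
    simp only [Set.mem_neg]
    convert this using 1
    abel
  · have := hadd _ hf0 _ hg0
    convert this using 1
    exact add_sub_add_comm _ _ _ _
end

section
/- Let X be a Hausdorff topological space, Z a Hausdorff topological vector space, C ⊆ Z a convex pointed cone with nonempty interior, K a nonempty subset of X, and f, g : K × K → Z. Assume there exists x₀ ∈ K such that for every fixed y ∈ K with y ≠ x₀, there exist nets (x_α) ⊆ K with lim x_α = x₀ and (w_α) ⊆ Z \ (−int C) such that w_α − f(x_α, y) − g(x₀, y) ∈ −C for all α, and such that the map x ↦ f(x, y) is almost upper semicontinuous at x₀. Then f(x₀, y) + g(x₀, y) ∉ −int C for all y ∈ K with y ≠ x₀. -/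
open Filter Topology Set Pointwise

universe u

theorem stmt7 {X Z : Type*} [TopologicalSpace X] [T2Space X]
    [AddCommGroup Z] [Module ℝ Z] [TopologicalSpace Z] [IsTopologicalAddGroup Z]
    [ContinuousSMul ℝ Z] [T2Space Z]
    (C : Set Z) (hcone : ∀ c ∈ C, ∀ t : ℝ, 0 ≤ t → t • c ∈ C)
    (hconvex : C + C = C) (hpointed : C ∩ (-C) = {0})
    (hint : (interior C).Nonempty)
    (K : Set X) (hKne : K.Nonempty) (f g : X → X → Z)
    (x₀ : X) (hx₀ : x₀ ∈ K)
    (hA : ∀ y ∈ K, y ≠ x₀ →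
      (∃ (D : DirIx.{u}) (x : D.carrier → X) (w : D.carrier → Z),
        (∀ α, x α ∈ K) ∧ Tendsto x atTop (𝓝 x₀) ∧
        (∀ α, w α ∉ -interior C) ∧
        (∀ α, w α - f (x α) y - g x₀ y ∈ -C)) ∧
      AUscAt.{u} C K (fun x => f x y) x₀) :
    ∀ y ∈ K, y ≠ x₀ → f x₀ y + g x₀ y ∉ -interior C := by
  intro y hy hne hcontra
  obtain ⟨⟨D, x, w, hxK, hxlim, hwnot, hwC⟩, husc⟩ := hA y hy hne
  obtain ⟨z, zl, hzlim, hzC, hfzl⟩ := husc D x hxK hxlim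
  have hCC : ∀ a ∈ C, ∀ b ∈ C, a + b ∈ C := by
    intro a ha b hb
    rw [← hconvex]; exact add_mem_add ha hb
  have hintC : ∀ a ∈ interior C, ∀ b ∈ C, a + b ∈ interior C := by
    intro a ha b hb
    have : a + b ∈ interior C + C := add_mem_add ha hb
    have h2 : interior C + C ⊆ interior (C + C) := subset_interior_add_left
    rw [hconvex] at h2
    exact h2 this
  -- zl + g x₀ y ∈ -interior C
  have hzl : -(zl + g x₀ y) ∈ interior C := by
    have h1 : -(f x₀ y + g x₀ y) ∈ interior C := hcontra
    have h2 : f x₀ y - zl ∈ C := hfzl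
    have := hintC _ h1 _ h2
    convert this using 1
    abel
  have hopen : IsOpen (-interior C) := isOpen_interior.neg
  have htend : Tendsto (fun α => z α + g x₀ y) atTop (𝓝 (zl + g x₀ y)) :=
    hzlim.add_const _
  have hev : ∀ᶠ α in atTop, z α + g x₀ y ∈ -interior C :=
    htend.eventually (hopen.mem_nhds (by simpa using hzl))
  obtain ⟨α, hα⟩ := hev.exists
  apply hwnot α
  -- w α = (z α + g x₀ y) + (w α - z α - g x₀ y), latter ∈ -C
  have hd : -(w α - z α - g x₀ y) ∈ C := by
    have h1 : -(w α - f (x α) y - g x₀ y) ∈ C := hwC α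
    have h2 : -(f (x α) y - z α) ∈ C := hzC α
    have := hCC _ h1 _ h2
    convert this using 1
    abel
  have : -w α ∈ interior C := by
    have := hintC _ (by simpa using hα) _ hd
    convert this using 1
    abel
  simpa using this
end

section
/- Let X be a Hausdorff topological space, Z a Hausdorff topological vector space, C ⊆ Z a convex pointed cone with nonempty interior, K a nonempty subset of X, and f, g : K × K → Z. Assume there exists x₀ ∈ K such that for every fixed y ∈ K with y ≠ x₀, there exist nets (y_α) ⊆ K with lim y_α = y and (w_α) ⊆ Z \ (−int C) such that w_α − f(x₀, y_α) − g(x₀, y) ∈ −C for all α, and such that the map z ↦ f(x₀, z) is almost upper semicontinuous at y. Then f(x₀, y) + g(x₀, y) ∉ −int C for all y ∈ K with y ≠ x₀. -/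
open Filter Topology Set Pointwise

universe u

theorem stmt8 {X Z : Type*} [TopologicalSpace X] [T2Space X]
    [AddCommGroup Z] [Module ℝ Z] [TopologicalSpace Z] [IsTopologicalAddGroup Z]
    [ContinuousSMul ℝ Z] [T2Space Z]
    (C : Set Z) (hcone : ∀ c ∈ C, ∀ t : ℝ, 0 ≤ t → t • c ∈ C)
    (hconvex : C + C = C) (hpointed : C ∩ (-C) = {0})
    (hint : (interior C).Nonempty)
    (K : Set X) (hKne : K.Nonempty) (f g : X → X → Z)
    (x₀ : X) (hx₀ : x₀ ∈ K)
    (hA : ∀ y ∈ K, y ≠ x₀ →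
      (∃ (D : DirIx.{u}) (yn : D.carrier → X) (w : D.carrier → Z),
        (∀ α, yn α ∈ K) ∧ Tendsto yn atTop (𝓝 y) ∧
        (∀ α, w α ∉ -interior C) ∧
        (∀ α, w α - f x₀ (yn α) - g x₀ y ∈ -C)) ∧
      AUscAt.{u} C K (fun z => f x₀ z) y) :
    ∀ y ∈ K, y ≠ x₀ → f x₀ y + g x₀ y ∉ -interior C := by
  -- interior C + C ⊆ interior C
  have hadd : ∀ a ∈ interior C, ∀ c ∈ C, a + c ∈ interior C := by
    intro a ha c hc
    have hopen : IsOpen ((interior C) + ({c} : Set Z)) := isOpen_interior.add_right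
    have hsub : (interior C) + ({c} : Set Z) ⊆ C := by
      have : (interior C) + ({c} : Set Z) ⊆ C + C :=
        Set.add_subset_add interior_subset (by simp [hc])
      intro x hx
      have hx' := this hx
      rwa [hconvex] at hx'
    have : a + c ∈ (interior C) + ({c} : Set Z) := add_mem_add ha rfl
    exact interior_maximal hsub hopen this
  intro y hy hyne hmem
  obtain ⟨⟨D, yn, w, hynK, hyntend, hwnot, hwC⟩, husc⟩ := hA y hy hyne
  obtain ⟨z, zl, hztend, hzC, hylC⟩ := husc D yn hynK hyntend
  -- zl + g x₀ y ∈ -interior C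
  have h1 : zl + g x₀ y ∈ -interior C := by
    rw [Set.mem_neg] at hmem ⊢
    have : -(zl + g x₀ y) = (f x₀ y - zl) + (-(f x₀ y + g x₀ y)) := by abel
    rw [this]
    rw [add_comm]
    exact hadd _ hmem _ hylC
  -- eventually z α + g x₀ y ∈ -interior C
  have hopen : IsOpen (-interior C) := isOpen_interior.neg
  have hnebot : (atTop : Filter D.carrier).NeBot := atTop_neBot_iff.2 ⟨D.ne, D.dir⟩
  have htend : Tendsto (fun α => z α + g x₀ y) atTop (𝓝 (zl + g x₀ y)) :=
    hztend.add_const _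
  have hev : ∀ᶠ α in atTop, z α + g x₀ y ∈ -interior C :=
    htend.eventually (hopen.mem_nhds h1)
  obtain ⟨α, hα⟩ := hev.exists
  apply hwnot α
  -- w α = (w α - f x₀ (yn α) - g x₀ y) + (f x₀ (yn α) - z α) + (z α + g x₀ y)
  have hdecomp : w α = ((w α - f x₀ (yn α) - g x₀ y) + (f x₀ (yn α) - z α))
      + (z α + g x₀ y) := by abel
  have h2 : -((w α - f x₀ (yn α) - g x₀ y) + (f x₀ (yn α) - z α)) ∈ C := by
    have hw := hwC α
    have hz' := hzC α
    rw [Set.mem_neg] at hw hz'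
    have heq : -((w α - f x₀ (yn α) - g x₀ y) + (f x₀ (yn α) - z α))
        = -(w α - f x₀ (yn α) - g x₀ y) + -(f x₀ (yn α) - z α) := by abel
    rw [heq]
    exact hconvex ▸ add_mem_add hw hz'
  have h3 : -(z α + g x₀ y) ∈ interior C := by rwa [Set.mem_neg] at hα
  rw [hdecomp, Set.mem_neg]
  have heq2 : -(((w α - f x₀ (yn α) - g x₀ y) + (f x₀ (yn α) - z α)) + (z α + g x₀ y))
      = -(z α + g x₀ y) + -((w α - f x₀ (yn α) - g x₀ y) + (f x₀ (yn α) - z α)) := by abel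
  rw [heq2]
  exact hadd _ h3 _ h2
end

section
/- Let X be a Hausdorff topological space, Z a Hausdorff topological vector space, C ⊆ Z a convex pointed cone with nonempty interior, K a nonempty subset of X, and f, g : K × K → Z. Assume there exists x₀ ∈ K such that for every fixed y ∈ K with y ≠ x₀, there exist nets (x_α), (u_α) ⊆ K with lim x_α = x₀, lim u_α = x₀ and (w_α) ⊆ Z \ (−int C) such that w_α − f(x_α, y) − g(u_α, y) ∈ −C for all α, and such that the maps x ↦ f(x, y) and x ↦ g(x, y) are almost upper semicontinuous at x₀. Then f(x₀, y) + g(x₀, y) ∉ −int C for all y ∈ K with y ≠ x₀. -/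
open Filter Topology Set Pointwise

universe u

theorem stmt9 {X Z : Type*} [TopologicalSpace X] [T2Space X]
    [AddCommGroup Z] [Module ℝ Z] [TopologicalSpace Z] [IsTopologicalAddGroup Z]
    [ContinuousSMul ℝ Z] [T2Space Z]
    (C : Set Z) (hcone : ∀ c ∈ C, ∀ t : ℝ, 0 ≤ t → t • c ∈ C)
    (hconvex : C + C = C) (hpointed : C ∩ (-C) = {0})
    (hint : (interior C).Nonempty)
    (K : Set X) (hKne : K.Nonempty) (f g : X → X → Z)
    (x₀ : X) (hx₀ : x₀ ∈ K)
    (hA : ∀ y ∈ K, y ≠ x₀ →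
      (∃ (D : DirIx.{u}) (x un : D.carrier → X) (w : D.carrier → Z),
        (∀ α, x α ∈ K) ∧ (∀ α, un α ∈ K) ∧
        Tendsto x atTop (𝓝 x₀) ∧ Tendsto un atTop (𝓝 x₀) ∧
        (∀ α, w α ∉ -interior C) ∧
        (∀ α, w α - f (x α) y - g (un α) y ∈ -C)) ∧
      AUscAt.{u} C K (fun x => f x y) x₀ ∧ AUscAt.{u} C K (fun x => g x y) x₀) :
    ∀ y ∈ K, y ≠ x₀ → f x₀ y + g x₀ y ∉ -interior C := by
  intro y hy hyne hmem
  obtain ⟨⟨D, x, un, w, hxK, hunK, hxlim, hunlim, hwnot, hwC⟩, hfusc, hgusc⟩ := hA y hy hyne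
  obtain ⟨z, zl, hzlim, hzC, hfzl⟩ := hfusc D x hxK hxlim
  obtain ⟨z', zl', hzlim', hzC', hgzl⟩ := hgusc D un hunK hunlim
  -- key: interior C + C ⊆ interior C
  have hkey : ∀ a ∈ interior C, ∀ c ∈ C, a + c ∈ interior C := by
    intro a ha c hc
    have hopen : IsOpen ((fun v => v + c) '' interior C) :=
      (isOpenMap_add_right c) _ isOpen_interior
    have hsub : (fun v => v + c) '' interior C ⊆ C := by
      rintro _ ⟨v, hv, rfl⟩
      rw [← hconvex]
      exact Set.add_mem_add (interior_subset hv) hc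
    exact interior_maximal hsub hopen ⟨a, ha, rfl⟩
  have hCC : ∀ a ∈ C, ∀ b ∈ C, a + b ∈ C := by
    intro a ha b hb; rw [← hconvex]; exact Set.add_mem_add ha hb
  -- limit is in -interior C
  have hlim : -(zl + zl') ∈ interior C := by
    have h1 : -(f x₀ y + g x₀ y) ∈ interior C := by
      rw [Set.mem_neg] at hmem
      simpa using hmem
    have h2 : (f x₀ y - zl) + (g x₀ y - zl') ∈ C := hCC _ hfzl _ hgzl
    have := hkey _ h1 _ h2
    convert this using 1
    abel
  have hopen2 : IsOpen (-interior C) := isOpen_interior.neg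
  have hev : ∀ᶠ α in atTop, z α + z' α ∈ -interior C := by
    have : Tendsto (fun α => z α + z' α) atTop (𝓝 (zl + zl')) := hzlim.add hzlim'
    exact this.eventually_mem (hopen2.mem_nhds (by simpa [Set.mem_neg] using hlim))
  obtain ⟨α, hα⟩ := hev.exists
  apply hwnot α
  rw [Set.mem_neg] at hα ⊢
  have h3 : (z α + z' α - w α) ∈ C := by
    have h4 : -(w α - f (x α) y - g (un α) y) ∈ C := (Set.mem_neg).mp (hwC α)
    have h5 : -(f (x α) y - z α) ∈ C := (Set.mem_neg).mp (hzC α)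
    have h6 : -(g (un α) y - z' α) ∈ C := (Set.mem_neg).mp (hzC' α)
    have := hCC _ (hCC _ h4 _ h5) _ h6
    convert this using 1
    abel
  have := hkey _ hα _ h3
  convert this using 1
  abel
end

section
/- Let X be a Hausdorff topological space, Z a Hausdorff topological vector space, C ⊆ Z a convex pointed cone with nonempty interior, K a nonempty subset of X, and f, g : K × K → Z. Assume there exists x₀ ∈ K such that for every fixed y ∈ K with y ≠ x₀, there exist nets (y_α), (v_α) ⊆ K with lim y_α = y, lim v_α = y and (w_α) ⊆ Z \ (−int C) such that w_α − f(x₀, y_α) − g(x₀, v_α) ∈ −C for all α, and such that the maps z ↦ f(x₀, z) and z ↦ g(x₀, z) are almost upper semicontinuous at y. Then f(x₀, y) + g(x₀, y) ∉ −int C for all y ∈ K with y ≠ x₀. -/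
open Filter Topology Set Pointwise

universe u

theorem stmt10 {X Z : Type*} [TopologicalSpace X] [T2Space X]
    [AddCommGroup Z] [Module ℝ Z] [TopologicalSpace Z] [IsTopologicalAddGroup Z]
    [ContinuousSMul ℝ Z] [T2Space Z]
    (C : Set Z) (hcone : ∀ c ∈ C, ∀ t : ℝ, 0 ≤ t → t • c ∈ C)
    (hconvex : C + C = C) (hpointed : C ∩ (-C) = {0})
    (hint : (interior C).Nonempty)
    (K : Set X) (hKne : K.Nonempty) (f g : X → X → Z)
    (x₀ : X) (hx₀ : x₀ ∈ K)
    (hA : ∀ y ∈ K, y ≠ x₀ →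
      (∃ (D : DirIx.{u}) (yn vn : D.carrier → X) (w : D.carrier → Z),
        (∀ α, yn α ∈ K) ∧ (∀ α, vn α ∈ K) ∧
        Tendsto yn atTop (𝓝 y) ∧ Tendsto vn atTop (𝓝 y) ∧
        (∀ α, w α ∉ -interior C) ∧
        (∀ α, w α - f x₀ (yn α) - g x₀ (vn α) ∈ -C)) ∧
      AUscAt.{u} C K (fun z => f x₀ z) y ∧ AUscAt.{u} C K (fun z => g x₀ z) y) :
    ∀ y ∈ K, y ≠ x₀ → f x₀ y + g x₀ y ∉ -interior C := by
  -- C is closed under addition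
  have hadd : ∀ a ∈ C, ∀ b ∈ C, a + b ∈ C := by
    intro a ha b hb
    rw [← hconvex]; exact Set.add_mem_add ha hb
  -- C + interior C ⊆ interior C
  have hCint : ∀ a ∈ C, ∀ b ∈ interior C, a + b ∈ interior C := by
    intro a ha b hb
    have : a +ᵥ interior C ⊆ C := by
      intro x hx
      rcases hx with ⟨c, hc, rfl⟩
      exact hadd a ha c (interior_subset hc)
    have hopen : IsOpen (a +ᵥ interior C) := (isOpen_interior).vadd a
    have : a +ᵥ interior C ⊆ interior C := hopen.subset_interior_iff.mpr this
    exact this ⟨b, hb, rfl⟩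
  intro y hy hyx hmem
  obtain ⟨⟨D, yn, vn, w, hynK, hvnK, hynt, hvnt, hwnot, hwC⟩, hf, hg⟩ := hA y hy hyx
  obtain ⟨zf, zfl, hzft, hzfC, hzfl⟩ := hf D yn hynK hynt
  obtain ⟨zg, zgl, hzgt, hzgC, hzgl⟩ := hg D vn hvnK hvnt
  -- zfl + zgl ∈ -interior C
  have hmem' : f x₀ y + g x₀ y ∈ -interior C := hmem
  rw [Set.mem_neg] at hmem'
  have hsum : f x₀ y + g x₀ y - (zfl + zgl) ∈ C := by
    have := hadd _ hzfl _ hzgl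
    convert this using 1; abel
  have hlim : zfl + zgl ∈ -interior C := by
    rw [Set.mem_neg]
    have : -(zfl + zgl) = (f x₀ y + g x₀ y - (zfl + zgl)) + -(f x₀ y + g x₀ y) := by abel
    rw [this]
    exact hCint _ hsum _ hmem'
  -- eventually zf α + zg α ∈ -interior C
  have hopen : IsOpen (-interior C : Set Z) := isOpen_interior.neg
  have hev : ∀ᶠ α in atTop, zf α + zg α ∈ -interior C :=
    (hzft.add hzgt).eventually (hopen.mem_nhds hlim)
  obtain ⟨α, hα⟩ := hev.exists
  apply hwnot α
  -- w α = (w α - zf α - zg α) + (zf α + zg α)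
  have h1 : w α - zf α - zg α ∈ -C := by
    have e1 : w α - f x₀ (yn α) - g x₀ (vn α) ∈ -C := hwC α
    have e2 : f x₀ (yn α) - zf α ∈ -C := hzfC α
    have e3 : g x₀ (vn α) - zg α ∈ -C := hzgC α
    rw [Set.mem_neg] at e1 e2 e3 ⊢
    have := hadd _ (hadd _ e1 _ e2) _ e3
    convert this using 1; abel
  rw [Set.mem_neg] at h1 hα ⊢
  have : -(w α) = -(w α - zf α - zg α) + -(zf α + zg α) := by abel
  rw [this]
  exact hCint _ h1 _ hα
end

section
/- Let X be a Hausdorff topological space, Z a Hausdorff topological vector space, C ⊆ Z a convex pointed cone with nonempty interior, K a nonempty subset of X, and f, g : K × K → Z. Assume there exists x₀ ∈ K such that for every fixed y ∈ K with y ≠ x₀, there exist nets (x_α), (y_α) ⊆ K with lim x_α = x₀, lim y_α = y and (w_α) ⊆ Z \ (−int C) such that w_α − f(x_α, y) − g(x₀, y_α) ∈ −C for all α, and such that the map x ↦ f(x, y) is almost upper semicontinuous at x₀ and the map z ↦ g(x₀, z) is almost upper semicontinuous at y. Then f(x₀, y) + g(x₀, y) ∉ −int C for all y ∈ K with y ≠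 x₀. -/
open Filter Topology Set Pointwise

universe u

theorem stmt11 {X Z : Type*} [TopologicalSpace X] [T2Space X]
    [AddCommGroup Z] [Module ℝ Z] [TopologicalSpace Z] [IsTopologicalAddGroup Z]
    [ContinuousSMul ℝ Z] [T2Space Z]
    (C : Set Z) (hcone : ∀ c ∈ C, ∀ t : ℝ, 0 ≤ t → t • c ∈ C)
    (hconvex : C + C = C) (hpointed : C ∩ (-C) = {0})
    (hint : (interior C).Nonempty)
    (K : Set X) (hKne : K.Nonempty) (f g : X → X → Z)
    (x₀ : X) (hx₀ : x₀ ∈ K)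
    (hA : ∀ y ∈ K, y ≠ x₀ →
      (∃ (D : DirIx.{u}) (x yn : D.carrier → X) (w : D.carrier → Z),
        (∀ α, x α ∈ K) ∧ (∀ α, yn α ∈ K) ∧
        Tendsto x atTop (𝓝 x₀) ∧ Tendsto yn atTop (𝓝 y) ∧
        (∀ α, w α ∉ -interior C) ∧
        (∀ α, w α - f (x α) y - g x₀ (yn α) ∈ -C)) ∧
      AUscAt.{u} C K (fun x => f x y) x₀ ∧ AUscAt.{u} C K (fun z => g x₀ z) y) :
    ∀ y ∈ K, y ≠ x₀ → f x₀ y + g x₀ y ∉ -interior C := by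
  intro y hy hyne hmem
  obtain ⟨⟨D, x, yn, w, hxK, hynK, hxlim, hynlim, hw, hwC⟩, hf, hg⟩ := hA y hy hyne
  obtain ⟨z, zl, hzl, hz1, hz2⟩ := hf D x hxK hxlim
  obtain ⟨z', zl', hzl', hz1', hz2'⟩ := hg D yn hynK hynlim
  have hadd : ∀ a ∈ C, ∀ b ∈ C, a + b ∈ C := by
    intro a ha b hb
    rw [← hconvex]; exact Set.add_mem_add ha hb
  have hic : ∀ a ∈ interior C, ∀ b ∈ C, a + b ∈ interior C := by
    intro a ha b hb
    have hopen : IsOpen ((Homeomorph.addRight b) '' interior C) :=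
      (Homeomorph.addRight b).isOpenMap _ isOpen_interior
    have hsub : (Homeomorph.addRight b) '' interior C ⊆ C := by
      rintro _ ⟨u, hu, rfl⟩
      exact hadd _ (interior_subset hu) _ hb
    exact interior_maximal hsub hopen ⟨a, ha, rfl⟩
  rw [Set.mem_neg] at hmem
  have h2 := hic _ hmem _ hz2
  have h3 := hic _ h2 _ hz2'
  have hzl2 : -(zl + zl') ∈ interior C := by
    have : -(f x₀ y + g x₀ y) + (f x₀ y - zl) + (g x₀ y - zl') = -(zl + zl') := by abel
    rwa [this] at h3
  have hopen : IsOpen ((fun v : Z => -v) ⁻¹' interior C) :=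
    isOpen_interior.preimage continuous_neg
  have hev : ∀ᶠ α in atTop, -(z α + z' α) ∈ interior C :=
    (hzl.add hzl') (hopen.mem_nhds hzl2)
  have hne : (atTop : Filter D.carrier).NeBot :=
    atTop_neBot_iff.mpr ⟨D.ne, D.dir⟩
  obtain ⟨α, hα⟩ := hev.exists
  have h4 : -(w α - f (x α) y - g x₀ (yn α)) ∈ C := (Set.mem_neg).1 (hwC α)
  have h5 : -(f (x α) y - z α) ∈ C := (Set.mem_neg).1 (hz1 α)
  have h6 : -(g x₀ (yn α) - z' α) ∈ C := (Set.mem_neg).1 (hz1' α)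
  have h7 : -w α + z α + z' α ∈ C := by
    have := hadd _ (hadd _ h4 _ h5) _ h6
    have heq : -(w α - f (x α) y - g x₀ (yn α)) + -(f (x α) y - z α)
        + -(g x₀ (yn α) - z' α) = -w α + z α + z' α := by abel
    rwa [heq] at this
  have h8 : -w α ∈ interior C := by
    have := hic _ hα _ h7
    have heq : -(z α + z' α) + (-w α + z α + z' α) = -w α := by abel
    rwa [heq] at this
  exact hw α (Set.mem_neg.2 h8)
end

section
/- Let X be a Hausdorff topological space, Z a Hausdorff topological vector space, C ⊆ Z a convex pointed cone with nonempty interior, K a nonempty subset of X, and f, g : K × K → Z. Let x₀ ∈ K be such that g(x₀, y) ∉ −int C for all y ∈ K and f(x₀, x₀) ∈ C. Assume that for every fixed y ∈ K with y ≠ x₀, the map x ↦ f(x, y) is almost upper semicontinuous at x₀ and there exist nets (x_α), (z_α) ⊆ K with lim x_α = x₀ such that g(x₀, z_α) − f(x_α, y) − g(x₀, y) ∈ −C for all α. Then f(x₀, y) + g(x₀, y) ∉ −int C for all y ∈ K. -/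
open Filter Topology Set Pointwise

universe u

theorem stmt13 {X Z : Type*} [TopologicalSpace X] [T2Space X]
    [AddCommGroup Z] [Module ℝ Z] [TopologicalSpace Z] [IsTopologicalAddGroup Z]
    [ContinuousSMul ℝ Z] [T2Space Z]
    (C : Set Z) (hcone : ∀ c ∈ C, ∀ t : ℝ, 0 ≤ t → t • c ∈ C)
    (hconvex : C + C = C) (hpointed : C ∩ (-C) = {0})
    (hint : (interior C).Nonempty)
    (K : Set X) (hKne : K.Nonempty) (f g : X → X → Z)
    (x₀ : X) (hx₀ : x₀ ∈ K)
    (hg0 : ∀ y ∈ K, g x₀ y ∉ -interior C) (hf0 : f x₀ x₀ ∈ C)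
    (hB : ∀ y ∈ K, y ≠ x₀ →
      (AUscAt.{u} C K (fun x => f x y) x₀) ∧
      (∃ (D : DirIx.{u}) (x z : D.carrier → X),
        (∀ α, x α ∈ K) ∧ (∀ α, z α ∈ K) ∧ Tendsto x atTop (𝓝 x₀) ∧
        (∀ α, g x₀ (z α) - f (x α) y - g x₀ y ∈ -C))) :
    ∀ y ∈ K, f x₀ y + g x₀ y ∉ -interior C := by
  -- interior C + C ⊆ interior C
  have hIC : ∀ a ∈ interior C, ∀ b ∈ C, a + b ∈ interior C := by
    intro a ha b hb
    have hopen : IsOpen (interior C + C) := IsOpen.add_right isOpen_interior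
    have hsub : interior C + C ⊆ C := by
      rintro w ⟨p, hp, q, hq, rfl⟩
      exact hconvex ▸ Set.add_mem_add (interior_subset hp) hq
    exact hopen.subset_interior_iff.mpr hsub (Set.add_mem_add ha hb)
  -- key: a ∈ -interior C, b ∈ -C ⇒ a + b ∈ -interior C
  have hkey : ∀ a ∈ -interior C, ∀ b ∈ -C, a + b ∈ -interior C := by
    intro a ha b hb
    rw [Set.mem_neg] at ha hb ⊢
    have := hIC _ ha _ hb
    simpa [neg_add, add_comm] using this
  intro y hy hmem
  by_cases hyx : y = x₀
  · rw [hyx] at hmem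
    have heq : g x₀ x₀ = (f x₀ x₀ + g x₀ x₀) + -(f x₀ x₀) := by abel
    have hg : g x₀ x₀ ∈ -interior C := by
      rw [heq]
      exact hkey _ hmem _ (Set.neg_mem_neg.mpr hf0)
    exact hg0 x₀ hx₀ hg
  · obtain ⟨husc, D, x, z, hxK, hzK, hxlim, hnet⟩ := hB y hy hyx
    obtain ⟨z', zl, hz'lim, hz'mem, hzl⟩ := husc D x hxK hxlim
    -- zl + g x₀ y ∈ -interior C
    have h1 : zl + g x₀ y ∈ -interior C := by
      have : zl + g x₀ y = (f x₀ y + g x₀ y) + -(f x₀ y - zl) := by abel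
      rw [this]
      exact hkey _ hmem _ (by simpa using hzl)
    -- eventually z' α + g x₀ y ∈ -interior C
    have hopen : IsOpen (-interior C) := isOpen_interior.neg
    have hcont : Tendsto (fun α => z' α + g x₀ y) atTop (𝓝 (zl + g x₀ y)) :=
      hz'lim.add tendsto_const_nhds
    have hev : ∀ᶠ α in atTop, z' α + g x₀ y ∈ -interior C :=
      hcont.eventually (hopen.mem_nhds h1)
    have hnb : (atTop : Filter D.carrier).NeBot := atTop_neBot_iff.mpr ⟨D.ne, D.dir⟩
    obtain ⟨α, hα⟩ := hev.exists
    -- g x₀ (z α) ∈ -interior C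
    have h2 : g x₀ (z α) - z' α - g x₀ y ∈ -C := by
      have hc := hnet α
      have hc2 := hz'mem α
      have : g x₀ (z α) - z' α - g x₀ y =
          (g x₀ (z α) - f (x α) y - g x₀ y) + (f (x α) y - z' α) := by abel
      rw [this, Set.mem_neg]
      have : -((g x₀ (z α) - f (x α) y - g x₀ y) + (f (x α) y - z' α)) =
          -(g x₀ (z α) - f (x α) y - g x₀ y) + -(f (x α) y - z' α) := by abel
      rw [this, ← hconvex]
      exact Set.add_mem_add (by simpa using hc) (by simpa using hc2)
    have h3 : g x₀ (z α) ∈ -interior C := by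
      have : g x₀ (z α) = (z' α + g x₀ y) + (g x₀ (z α) - z' α - g x₀ y) := by abel
      rw [this]
      exact hkey _ hα _ h2
    exact hg0 _ (hzK α) h3
end

section
/- Let X be a Hausdorff topological space, Z a Hausdorff topological vector space, C ⊆ Z a convex pointed cone with nonempty interior, K a nonempty subset of X, and f, g : K × K → Z. Let x₀ ∈ K be such that g(x₀, y) ∉ −int C for all y ∈ K and f(x₀, x₀) ∈ C. Assume that for every fixed y ∈ K with y ≠ x₀, the map x ↦ f(x, y) is almost upper semicontinuous at x₀, the map z ↦ g(x₀, z) is almost upper semicontinuous at y, and there exist nets (x_α), (y_α), (z_α) ⊆ K with lim x_α = x₀ and lim y_α = y such that g(x₀, z_α) − f(x_α, y) − g(x₀, y_α) ∈ −C for all α. Then f(x₀, y) + g(x₀, y) ∉ −int C for all y ∈ K. -/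
open Filter Topology Set Pointwise

universe u

theorem stmt14 {X Z : Type*} [TopologicalSpace X] [T2Space X]
    [AddCommGroup Z] [Module ℝ Z] [TopologicalSpace Z] [IsTopologicalAddGroup Z]
    [ContinuousSMul ℝ Z] [T2Space Z]
    (C : Set Z) (hcone : ∀ c ∈ C, ∀ t : ℝ, 0 ≤ t → t • c ∈ C)
    (hconvex : C + C = C) (hpointed : C ∩ (-C) = {0})
    (hint : (interior C).Nonempty)
    (K : Set X) (hKne : K.Nonempty) (f g : X → X → Z)
    (x₀ : X) (hx₀ : x₀ ∈ K)
    (hg0 : ∀ y ∈ K, g x₀ y ∉ -interior C) (hf0 : f x₀ x₀ ∈ C)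
    (hB : ∀ y ∈ K, y ≠ x₀ →
      (AUscAt.{u} C K (fun x => f x y) x₀ ∧ AUscAt.{u} C K (fun z => g x₀ z) y) ∧
      (∃ (D : DirIx.{u}) (x yn z : D.carrier → X),
        (∀ α, x α ∈ K) ∧ (∀ α, yn α ∈ K) ∧ (∀ α, z α ∈ K) ∧
        Tendsto x atTop (𝓝 x₀) ∧ Tendsto yn atTop (𝓝 y) ∧
        (∀ α, g x₀ (z α) - f (x α) y - g x₀ (yn α) ∈ -C))) :
    ∀ y ∈ K, f x₀ y + g x₀ y ∉ -interior C := by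
  have hICC : interior C + C ⊆ interior C := by
    refine interior_maximal ?_ isOpen_interior.add_right
    calc interior C + C ⊆ C + C := add_subset_add interior_subset subset_rfl
      _ = C := hconvex
  have haux : ∀ a b : Z, a ∈ -interior C → b ∈ -C → a + b ∈ -interior C := by
    intro a b ha hb
    have : -a + -b ∈ interior C := hICC (add_mem_add (Set.mem_neg.mp ha) (Set.mem_neg.mp hb))
    rw [Set.mem_neg]; simpa [neg_add, add_comm] using this
  intro y hy hmem
  by_cases hyx : y = x₀
  · subst hyx
    apply hg0 y hy
    have h1 : g y y = (f y y + g y y) + (-(f y y)) := by abel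
    rw [h1]
    exact haux _ _ hmem (Set.neg_mem_neg.mpr hf0)
  · obtain ⟨⟨hfusc, hgusc⟩, D, x, yn, z, hxK, hynK, hzK, hxt, hynt, hnet⟩ := hB y hy hyx
    obtain ⟨w, wl, hwt, hw, hwl⟩ := hfusc D x hxK hxt
    obtain ⟨v, vl, hvt, hv, hvl⟩ := hgusc D yn hynK hynt
    have hsum : wl + vl ∈ -interior C := by
      have h1 : wl + vl = (f x₀ y + g x₀ y) + (-(f x₀ y - wl)) + (-(g x₀ y - vl)) := by abel
      rw [h1]
      exact haux _ _ (haux _ _ hmem (Set.neg_mem_neg.mpr hwl)) (Set.neg_mem_neg.mpr hvl)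
    have hopen : IsOpen (-interior C) := isOpen_interior.neg
    have hnb : (atTop : Filter D.carrier).NeBot := atTop_neBot
    obtain ⟨α, hα⟩ := ((hwt.add hvt).eventually (hopen.mem_nhds hsum)).exists
    apply hg0 (z α) (hzK α)
    have heq : g x₀ (z α) = (w α + v α) + (g x₀ (z α) - f (x α) y - g x₀ (yn α))
        + (f (x α) y - w α) + (g x₀ (yn α) - v α) := by abel
    rw [heq]
    exact haux _ _ (haux _ _ (haux _ _ hα (hnet α)) (hw α)) (hv α)
end

section
/- Let X be a Hausdorff topological space, Z a Hausdorff topological vector space, C ⊆ Z a convex pointed cone with nonempty interior, K a nonempty subset of X, and f, g : K × K → Z. Let x₀ ∈ K be such that g(x₀, y) ∉ −int C for all y ∈ K and f(x₀, x₀) ∈ C. Assume that for every fixed y ∈ K with y ≠ x₀, the map x ↦ g(x, y) is almost upper semicontinuous at x₀, the map z ↦ f(x₀, z) is almost upper semicontinuous at y, and there exist nets (x_α), (y_α), (z_α) ⊆ K with lim x_α = x₀ and lim y_α = y such that g(x₀, z_α) − f(x₀, y_α) − g(x_α, y) ∈ −C for all α. Then f(x₀, y) + g(x₀, y) ∉ −int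 C for all y ∈ K. -/
open Filter Topology Set Pointwise

universe u

theorem stmt15 {X Z : Type*} [TopologicalSpace X] [T2Space X]
    [AddCommGroup Z] [Module ℝ Z] [TopologicalSpace Z] [IsTopologicalAddGroup Z]
    [ContinuousSMul ℝ Z] [T2Space Z]
    (C : Set Z) (hcone : ∀ c ∈ C, ∀ t : ℝ, 0 ≤ t → t • c ∈ C)
    (hconvex : C + C = C) (hpointed : C ∩ (-C) = {0})
    (hint : (interior C).Nonempty)
    (K : Set X) (hKne : K.Nonempty) (f g : X → X → Z)
    (x₀ : X) (hx₀ : x₀ ∈ K)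
    (hg0 : ∀ y ∈ K, g x₀ y ∉ -interior C) (hf0 : f x₀ x₀ ∈ C)
    (hB : ∀ y ∈ K, y ≠ x₀ →
      (AUscAt.{u} C K (fun x => g x y) x₀ ∧ AUscAt.{u} C K (fun z => f x₀ z) y) ∧
      (∃ (D : DirIx.{u}) (x yn z : D.carrier → X),
        (∀ α, x α ∈ K) ∧ (∀ α, yn α ∈ K) ∧ (∀ α, z α ∈ K) ∧
        Tendsto x atTop (𝓝 x₀) ∧ Tendsto yn atTop (𝓝 y) ∧
        (∀ α, g x₀ (z α) - f x₀ (yn α) - g (x α) y ∈ -C))) :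
    ∀ y ∈ K, f x₀ y + g x₀ y ∉ -interior C := by

  have key : ∀ a ∈ interior C, ∀ c ∈ C, a + c ∈ interior C := by
    intro a ha c hc
    have hsub : (fun z => z + c) '' interior C ⊆ C := by
      rintro _ ⟨b, hb, rfl⟩
      rw [← hconvex]; exact add_mem_add (interior_subset hb) hc
    have hopen : IsOpen ((fun z => z + c) '' interior C) :=
      (isOpenMap_add_right c) _ isOpen_interior
    exact interior_maximal hsub hopen ⟨a, ha, rfl⟩
  intro y hy hcon
  rw [Set.mem_neg] at hcon
  by_cases hyx : y = x₀
  · subst hyx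
    apply hg0 y hy
    rw [Set.mem_neg]
    have h := key _ hcon _ hf0
    have heq : -(f y y + g y y) + f y y = -(g y y) := by abel
    rwa [heq] at h
  · obtain ⟨⟨hg_usc, hf_usc⟩, D, x, yn, z, hxK, hynK, hzK, hxlim, hynlim, hnet⟩ :=
      hB y hy hyx
    obtain ⟨w, wl, hwlim, hw1, hw2⟩ := hg_usc D x hxK hxlim
    obtain ⟨v, vl, hvlim, hv1, hv2⟩ := hf_usc D yn hynK hynlim
    have h1 : (f x₀ y - vl) + (g x₀ y - wl) ∈ C := by
      rw [← hconvex]; exact add_mem_add hv2 hw2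
    have hvwl : -(vl + wl) ∈ interior C := by
      have h := key _ hcon _ h1
      have heq : -(f x₀ y + g x₀ y) + ((f x₀ y - vl) + (g x₀ y - wl)) = -(vl + wl) := by
        abel
      rwa [heq] at h
    have htend : Tendsto (fun α => -(v α + w α)) atTop (𝓝 (-(vl + wl))) :=
      (hvlim.add hwlim).neg
    have hev : ∀ᶠ α in atTop, -(v α + w α) ∈ interior C :=
      htend.eventually (isOpen_interior.eventually_mem hvwl)
    obtain ⟨α, hα⟩ := hev.exists
    have hc1 := hnet α
    have hc2 := hv1 α
    have hc3 := hw1 α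
    rw [Set.mem_neg] at hc1 hc2 hc3
    have hcC : -(g x₀ (z α) - f x₀ (yn α) - g (x α) y) +
        (-(f x₀ (yn α) - v α) + -(g (x α) y - w α)) ∈ C := by
      rw [← hconvex]
      exact add_mem_add hc1 (by rw [← hconvex]; exact add_mem_add hc2 hc3)
    have h := key _ hα _ hcC
    have heq : -(v α + w α) + (-(g x₀ (z α) - f x₀ (yn α) - g (x α) y) +
        (-(f x₀ (yn α) - v α) + -(g (x α) y - w α))) = -(g x₀ (z α)) := by abel
    rw [heq] at h
    exact hg0 (z α) (hzK α) (Set.mem_neg.mpr h)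
end

section
/- Let X and Z be Hausdorff topological vector spaces, C ⊆ Z a convex pointed cone with nonempty interior, and K a nonempty convex subset of X. Let f, g : K × K → Z and let x₀ ∈ K satisfy g(x₀, y) ∉ −int C for all y ∈ K. Assume: (i) f(x, x) ∈ C for all x ∈ K; (ii) for every fixed y ∈ K with y ≠ x₀ and every t ∈ (0,1) there exists z = z(t,y) ∈ K such that g(x₀, z) − f((1−t)x₀ + t y, y) − g(x₀, y) ∈ −C; (iii) if for some y ∈ K one has f((1−t)x₀ + t y, y) + g(x₀, y) ∉ −int C for all t ∈ (0,1], then f(x₀, y) + g(x₀, y) ∉ −int C. Then f(x₀, y) + g(x₀, y) ∉ −int C for all y ∈ K. -/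
open Filter Topology Set Pointwise

universe u

theorem stmt16 {X Z : Type*}
    [AddCommGroup X] [Module ℝ X] [TopologicalSpace X] [IsTopologicalAddGroup X]
    [ContinuousSMul ℝ X] [T2Space X]
    [AddCommGroup Z] [Module ℝ Z] [TopologicalSpace Z] [IsTopologicalAddGroup Z]
    [ContinuousSMul ℝ Z] [T2Space Z]
    (C : Set Z) (hcone : ∀ c ∈ C, ∀ t : ℝ, 0 ≤ t → t • c ∈ C)
    (hconvex : C + C = C) (hpointed : C ∩ (-C) = {0})
    (hint : (interior C).Nonempty)
    (K : Set X) (hKne : K.Nonempty) (hKconv : Convex ℝ K)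
    (f g : X → X → Z) (x₀ : X) (hx₀ : x₀ ∈ K)
    (hg0 : ∀ y ∈ K, g x₀ y ∉ -interior C)
    (hi : ∀ x ∈ K, f x x ∈ C)
    (hii : ∀ y ∈ K, y ≠ x₀ → ∀ t ∈ Set.Ioo (0 : ℝ) 1, ∃ z ∈ K,
      g x₀ z - f ((1 - t) • x₀ + t • y) y - g x₀ y ∈ -C)
    (hiii : ∀ y ∈ K,
      (∀ t ∈ Set.Ioc (0 : ℝ) 1, f ((1 - t) • x₀ + t • y) y + g x₀ y ∉ -interior C) →
      f x₀ y + g x₀ y ∉ -interior C) :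
    ∀ y ∈ K, f x₀ y + g x₀ y ∉ -interior C := by
  -- Key lemma: interior C + C ⊆ interior C
  have key : ∀ a ∈ interior C, ∀ b ∈ C, a + b ∈ interior C := by
    intro a ha b hb
    have hopen : IsOpen ((fun z => z + b) '' interior C) :=
      (isOpenMap_add_right b) _ isOpen_interior
    have hsub : (fun z => z + b) '' interior C ⊆ C := by
      rintro _ ⟨x, hx, rfl⟩
      rw [← hconvex]
      exact add_mem_add (interior_subset hx) hb
    exact interior_maximal hsub hopen ⟨a, ha, rfl⟩
  -- a ∈ -interior C, b ∈ C ⇒ a - b ∈ -interior C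
  have key' : ∀ a ∈ -interior C, ∀ b ∈ C, a - b ∈ -interior C := by
    intro a ha b hb
    rw [Set.mem_neg] at ha ⊢
    have := key _ ha _ hb
    simpa [neg_sub, sub_eq_add_neg, add_comm] using this
  intro y hy
  by_cases hyx : y = x₀
  · subst hyx
    intro hmem
    exact hg0 y hy (by simpa using key' _ hmem _ (hi y hy))
  · apply hiii y hy
    intro t ht hmem
    rcases eq_or_lt_of_le ht.2 with h1 | h1
    · -- t = 1
      subst h1
      simp only [one_smul, sub_self, zero_smul, zero_add] at hmem
      have : f y y + g x₀ y - f y y ∈ -interior C := key' _ hmem _ (hi y hy)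
      rw [add_sub_cancel_left] at this
      exact hg0 y hy this
    · obtain ⟨z, hz, hzmem⟩ := hii y hy hyx t ⟨ht.1, h1⟩
      rw [Set.mem_neg] at hzmem
      -- g x₀ z - (f x_t y + g x₀ y) ∈ -C, so g x₀ z = (f x_t y + g x₀ y) - c, c ∈ C
      have hc : -(g x₀ z - f ((1 - t) • x₀ + t • y) y - g x₀ y) ∈ C := hzmem
      have : g x₀ z ∈ -interior C := by
        have := key' _ hmem _ hc
        have heq : f ((1 - t) • x₀ + t • y) y + g x₀ y -
            -(g x₀ z - f ((1 - t) • x₀ + t • y) y - g x₀ y) = g x₀ z := by abel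
        rwa [heq] at this
      exact hg0 z hz this
end
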